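/- Let q be a pmf on a countable set 𝒳, and let p, p_1, p_2, ... be pmfs on a countable set 𝒴 such that p(y) = lim_{i→∞} p_i(y) for every y ∈ 𝒴, and such that p_i is an aggregation of q (q ⊑ p_i) for every i ≥ 1. Then p is an aggregation of q (q ⊑ p). -/

import Mathlib

open scoped ENNReal Classical
open Filter

namespace MEC

/-- A probability mass function on `α`: (nonnegative) masses summing to `1`. -/
def IsPMF {α : Type*} (p : α → ℝ≥0∞) : Prop := ∑' x, p x = 1

/-- `p` is an aggregation of `q`, written `q ⊑ p`: there is a map `g` sending the support of
`q` into the support of `p` such that `p` is the pushforward of `q` under `g`. -/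
def Agg {α β : Type*} (q : α → ℝ≥0∞) (p : β → ℝ≥0∞) : Prop :=
  ∃ g : α → β, (∀ x, q x ≠ 0 → p (g x) ≠ 0) ∧
    ∀ y, p y = ∑' x, if g x = y then q x else 0

/-- Sum of the `k` largest masses of `p`, i.e. `max_{A, |A| ≤ k} p(A)`. -/
noncomputable def topk {α : Type*} (p : α → ℝ≥0∞) (k : ℕ) : ℝ≥0∞ :=
  ⨆ (A : Finset α) (_ : A.card ≤ k), ∑ x ∈ A, p x

/-- `q` is majorized by `p`, written `q ⪯ p`: for every `k`, the sum of the `k` largest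
masses of `q` is at most the sum of the `k` largest masses of `p`. -/
def Majorized {α β : Type*} (q : α → ℝ≥0∞) (p : β → ℝ≥0∞) : Prop :=
  ∀ k : ℕ, topk q k ≤ topk p k

/-- Product pmf `(q × r)(x,z) = q(x) · r(z)`. -/
noncomputable def prodFun {α β : Type*} (q : α → ℝ≥0∞) (r : β → ℝ≥0∞) : α × β → ℝ≥0∞ :=
  fun z => q z.1 * r z.2

/-- `Geom_{1/2}` on `ℕ+ = {1,2,3,...}`, with mass `2^{-x}` at `x`. -/
noncomputable def geomHalf : ℕ+ → ℝ≥0∞ := fun x => 2⁻¹ ^ (x : ℕ)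

/-- Capped geometric distribution `CGeom_{1/2,k}` on `{1,...,k} ⊆ ℕ+`. -/
noncomputable def cgeomHalf (k : ℕ) : ℕ+ → ℝ≥0∞ := fun x =>
  if (x : ℕ) < k then 2⁻¹ ^ (x : ℕ) else if (x : ℕ) = k then 2⁻¹ ^ (k - 1) else 0

/-- `inf_{p ∈ S} max_{A ⊆ supp(p), |A| ≤ k} p(A)`. -/
noncomputable def infTopk {α : Type*} (S : Set (α → ℝ≥0∞)) (k : ℕ) : ℝ≥0∞ :=
  ⨅ p ∈ S, topk p k

/-- The greatest lower bound `⋀S` of `S` with respect to majorization, as a pmf on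
`ℕ+ = {1,2,...}`, with `(⋀S)(k) = inf_{p∈S} max_{|A|≤k} p(A) − inf_{p∈S} max_{|A|≤k−1} p(A)`. -/
noncomputable def glb {α : Type*} (S : Set (α → ℝ≥0∞)) : ℕ+ → ℝ≥0∞ :=
  fun k => infTopk S (k : ℕ) - infTopk S ((k : ℕ) - 1)

/-- Condition for the existence of `⋀S`:
`lim_{k→∞} inf_{p∈S} max_{A⊆supp(p), |A|≤k} p(A) = 1`. -/
def GlbExists {α : Type*} (S : Set (α → ℝ≥0∞)) : Prop :=
  Tendsto (fun k => infTopk S k) atTop (nhds 1)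

/-- Base-2 logarithm on `ℝ≥0∞` (intended for arguments in `[1,∞]`). -/
noncomputable def log2 (x : ℝ≥0∞) : ℝ≥0∞ :=
  if x = ∞ then ∞ else ENNReal.ofReal (Real.logb 2 x.toReal)

/-- Shannon entropy (base 2): `H(p) = Σ_x p(x) log₂ (1/p(x))`. -/
noncomputable def shannon {α : Type*} (p : α → ℝ≥0∞) : ℝ≥0∞ :=
  ∑' x, p x * log2 (p x)⁻¹

/-- Rényi entropy of order `a ∈ [0,∞]` (base 2):
`H_a(p) = (1/(1−a)) log₂ Σ_{x ∈ supp(p)} p(x)^a` for `a ∉ {1,∞}` (for `a > 1` this is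
written in the equivalent form `(1/(a−1)) log₂ (Σ_{x ∈ supp(p)} p(x)^a)⁻¹` so that it is
nonnegative), Shannon entropy for `a = 1`, and `−log₂ max_x p(x)` for `a = ∞`. -/
noncomputable def renyi {α : Type*} (p : α → ℝ≥0∞) (a : ℝ≥0∞) : ℝ≥0∞ :=
  if a = 1 then shannon p
  else if a = ∞ then log2 (⨆ x, p x)⁻¹
  else if a < 1 then log2 (∑' x, if p x = 0 then 0 else p x ^ a.toReal) * (1 - a)⁻¹
  else log2 (∑' x, if p x = 0 then 0 else p x ^ a.toReal)⁻¹ * (a - 1)⁻¹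

/-- `q ∈ Γ̃(S)`: `q` (a pmf over `ℕ`, without loss of generality) is an underlying
distribution of a coupling of `S`, i.e. `q ⊑ p` for every `p ∈ S`. -/
def UnderlyingCoupling {α : Type*} (S : Set (α → ℝ≥0∞)) (q : ℕ → ℝ≥0∞) : Prop :=
  IsPMF q ∧ ∀ p ∈ S, Agg q p

/-- `H*_a(S) = inf_{q ∈ Γ̃(S)} H_a(q)`, the minimum Rényi entropy of couplings of `S`. -/
noncomputable def minRenyi {α : Type*} (S : Set (α → ℝ≥0∞)) (a : ℝ≥0∞) : ℝ≥0∞ :=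
  ⨅ (q : ℕ → ℝ≥0∞) (_ : UnderlyingCoupling S q), renyi q a


/-- Dominated convergence for `ℝ≥0∞`-valued tsums along an arbitrary filter. -/
lemma ennreal_tendsto_tsum_of_dominated {ι γ : Type*} {L : Filter ι}
    {f : ι → γ → ℝ≥0∞} {g bound : γ → ℝ≥0∞}
    (hbd : ∑' x, bound x ≠ ∞)
    (hfb : ∀ i x, f i x ≤ bound x)
    (hlim : ∀ x, Tendsto (f · x) L (nhds (g x))) :
    Tendsto (fun i => ∑' x, f i x) L (nhds (∑' x, g x)) := by
  rcases L.eq_or_neBot with rfl | hne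
  · simp
  have hgb : ∀ x, g x ≤ bound x := fun x =>
    le_of_tendsto (hlim x) (Filter.Eventually.of_forall fun i => hfb i x)
  have ha : ∑' x, g x ≠ ∞ :=
    ne_top_of_le_ne_top hbd (ENNReal.tsum_le_tsum hgb)
  rw [ENNReal.tendsto_nhds ha]
  intro ε hε
  rcases eq_or_ne ε ⊤ with rfl | hεtop
  · exact Filter.Eventually.of_forall fun i => ⟨by simp, by simp⟩
  set δ := ε / 2 with hδ
  have hδ0 : 0 < δ := ENNReal.half_pos hε.ne'
  obtain ⟨F, hF⟩ :=
    ((ENNReal.tendsto_tsum_compl_atTop_zero hbd).eventually (Iio_mem_nhds hδ0)).exists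
  have hfin : Tendsto (fun i => ∑ x ∈ F, f i x) L (nhds (∑ x ∈ F, g x)) :=
    tendsto_finset_sum _ fun x _ => hlim x
  have hFg_ne : ∑ x ∈ F, g x ≠ ⊤ := ne_top_of_le_ne_top ha (ENNReal.sum_le_tsum F)
  have hev := (ENNReal.tendsto_nhds hFg_ne).1 hfin δ hδ0
  -- tail bounds
  have htail_g : ∑' (x : {x // x ∉ F}), g x ≤ δ :=
    le_trans (ENNReal.tsum_le_tsum fun x => hgb x) hF.le
  have hsplit : ∀ h : γ → ℝ≥0∞, ∑' x, h x = (∑ x ∈ F, h x) + ∑' (x : {x // x ∉ F}), h x := by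
    intro h
    rw [← Summable.tsum_add_tsum_compl (s := (F : Set γ)) ENNReal.summable ENNReal.summable,
      Finset.tsum_subtype']
    rfl
  filter_upwards [hev] with i hi
  obtain ⟨hi1, hi2⟩ := hi
  constructor
  · -- lower bound
    have h1 : ∑' x, g x ≤ (∑ x ∈ F, g x) + δ := by
      rw [hsplit g]; exact add_le_add_right htail_g _
    have h2 : ∑' x, g x - δ ≤ ∑ x ∈ F, g x := tsub_le_iff_right.mpr h1
    calc ∑' x, g x - ε = ∑' x, g x - (δ + δ) := by rw [hδ, ENNReal.add_halves]
    _ = (∑' x, g x - δ) - δ := by rw [tsub_tsub]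
    _ ≤ ∑ x ∈ F, g x - δ := tsub_le_tsub_right h2 δ
    _ ≤ ∑ x ∈ F, f i x := hi1
    _ ≤ ∑' x, f i x := ENNReal.sum_le_tsum F
  · -- upper bound
    have htail_i : ∑' (x : {x // x ∉ F}), f i x ≤ δ :=
      le_trans (ENNReal.tsum_le_tsum fun x => hfb i x) hF.le
    calc ∑' x, f i x = (∑ x ∈ F, f i x) + ∑' (x : {x // x ∉ F}), f i x := hsplit (f i)
    _ ≤ ((∑ x ∈ F, g x) + δ) + δ := add_le_add hi2 htail_i
    _ = (∑ x ∈ F, g x) + ε := by rw [add_assoc, hδ, ENNReal.add_halves]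
    _ ≤ ∑' x, g x + ε := add_le_add_left (ENNReal.sum_le_tsum F) ε

/-- Proposition 1: aggregation is closed under pointwise limits:
if `p(y) = lim_i pᵢ(y)` for every `y` and `q ⊑ pᵢ` for every `i`, then `q ⊑ p`. -/
theorem agg_closed_under_pointwise_limit {α β : Type*} [Countable α] [Countable β]
    (q : α → ℝ≥0∞) (p : β → ℝ≥0∞) (pseq : ℕ → β → ℝ≥0∞)
    (hq : IsPMF q) (hp : IsPMF p) (hpseq : ∀ i, IsPMF (pseq i))
    (hlim : ∀ y, Tendsto (fun i => pseq i y) atTop (nhds (p y)))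
    (hagg : ∀ i, Agg q (pseq i)) :
    Agg q p := by
  have hβ : Nonempty β := by
    by_contra h
    rw [not_nonempty_iff] at h
    rw [IsPMF, tsum_empty] at hp
    exact zero_ne_one hp
  choose gs hgs1 hgs2 using hagg
  have hqle : ∀ i x, q x ≤ pseq i (gs i x) := by
    intro i x
    rw [hgs2 i (gs i x)]
    have := ENNReal.le_tsum (f := fun x' => if gs i x' = gs i x then q x' else 0) x
    simpa using this
  have hq1 : ∀ x, q x ≤ 1 := fun x => hq ▸ ENNReal.le_tsum x
  have hconf : ∀ x, q x ≠ 0 → ∃ F : Finset β, ∀ᶠ i in atTop, gs i x ∈ F := by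
    intro x hx
    have hxt : q x ≠ ⊤ := ne_top_of_le_ne_top ENNReal.one_ne_top (hq1 x)
    have hε0 : 0 < q x / 2 := ENNReal.half_pos hx
    have hεlt : q x / 2 < q x := ENNReal.half_lt_self hx hxt
    have h1 : (1 : ℝ≥0∞) - q x / 2 < 1 :=
      ENNReal.sub_lt_self ENNReal.one_ne_top one_ne_zero hε0.ne'
    have h1' : (1 : ℝ≥0∞) - q x / 2 < ⨆ F : Finset β, ∑ y ∈ F, p y := by
      rwa [← ENNReal.tsum_eq_iSup_sum, hp]
    obtain ⟨F, hF⟩ := lt_iSup_iff.mp h1'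
    refine ⟨F, ?_⟩
    have hten : Tendsto (fun i => ∑ y ∈ F, pseq i y) atTop (nhds (∑ y ∈ F, p y)) :=
      tendsto_finset_sum _ fun y _ => hlim y
    filter_upwards [hten.eventually (Ioi_mem_nhds hF)] with i hi
    by_contra hmem
    have hsum : pseq i (gs i x) + ∑ y ∈ F, pseq i y ≤ 1 := by
      have h2 : ∑ y ∈ insert (gs i x) F, pseq i y ≤ ∑' y, pseq i y := ENNReal.sum_le_tsum _
      rw [Finset.sum_insert hmem, hpseq i] at h2
      exact h2
    have h3 : q x + ∑ y ∈ F, pseq i y ≤ 1 :=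
      le_trans (add_le_add_left (hqle i x) _) hsum
    have h4 : ∑ y ∈ F, pseq i y ≤ 1 - q x := ENNReal.le_sub_of_add_le_left hxt h3
    have h5 : (1 : ℝ≥0∞) - q x ≤ 1 - q x / 2 := tsub_le_tsub_left hεlt.le 1
    exact absurd (h4.trans h5) (not_le.mpr hi)
  let U : Ultrafilter ℕ := Ultrafilter.of atTop
  have hUle : (U : Filter ℕ) ≤ atTop := Ultrafilter.of_le _
  have hGex : ∀ x, ∃ y : β, q x ≠ 0 → ∀ᶠ i in (U : Filter ℕ), gs i x = y := by
    intro x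
    by_cases hx : q x = 0
    · exact ⟨Classical.arbitrary β, fun h => absurd hx h⟩
    · obtain ⟨F, hF⟩ := hconf x hx
      have hFU : {i | gs i x ∈ F} ∈ (U : Filter ℕ) := hUle hF
      have hun : (⋃ y ∈ (F : Set β), {i | gs i x = y}) ∈ U := by
        convert hFU using 1
        have hset : (⋃ y ∈ (F : Set β), {i | gs i x = y}) = {i | gs i x ∈ F} := by ext i; simp
        rw [hset]; rfl
      obtain ⟨y, _, hy⟩ := (Ultrafilter.finite_biUnion_mem_iff F.finite_toSet).mp hun
      exact ⟨y, fun _ => hy⟩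
  choose G hG using hGex
  have key : ∀ y, p y = ∑' x, if G x = y then q x else 0 := by
    intro y
    have h1 : Tendsto (fun i => pseq i y) (U : Filter ℕ) (nhds (p y)) :=
      (hlim y).mono_left hUle
    have h2 : Tendsto (fun i => ∑' x, if gs i x = y then q x else 0) (U : Filter ℕ)
        (nhds (∑' x, if G x = y then q x else 0)) := by
      apply ennreal_tendsto_tsum_of_dominated (bound := q)
      · rw [hq]; exact ENNReal.one_ne_top
      · intro i x; split_ifs <;> simp
      · intro x
        by_cases hx : q x = 0
        · simp [hx]
        · apply Tendsto.congr' ?_ tendsto_const_nhds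
          filter_upwards [hG x hx] with i hi
          rw [hi]
    have h3 : Tendsto (fun i => pseq i y) (U : Filter ℕ)
        (nhds (∑' x, if G x = y then q x else 0)) :=
      h2.congr fun i => (hgs2 i y).symm
    exact tendsto_nhds_unique h1 h3
  refine ⟨G, ?_, key⟩
  intro x hx
  rw [key (G x)]
  intro h0
  have hle : q x ≤ ∑' x', if G x' = G x then q x' else 0 := by
    have := ENNReal.le_tsum (f := fun x' => if G x' = G x then q x' else 0) x
    simpa using this
  rw [h0] at hle
  exact hx (le_antisymm hle zero_le)


end MEC
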